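/- Let Ω be a measurable subset of ℝ^N with finite Lebesgue measure. Let f, f_n : Ω → ℝ (n ∈ ℕ) be measurable functions and let g, g_n ∈ L¹(Ω) (n ∈ ℕ). Assume that f_n → f almost everywhere in Ω, that g_n → g weakly in L¹(Ω), that each product f_n·g_n belongs to L¹(Ω), and that f_n·g_n → ξ weakly in L¹(Ω) for some ξ ∈ L¹(Ω). Then ξ = f·g almost everywhere in Ω. -/

import Mathlib

open MeasureTheory Filter
open scoped ENNReal

section Aux

variable {α : Type*} [MeasurableSpace α] {μ : Measure α} [IsFiniteMeasure μ]

lemma ae_norm_le_norm_top (φ : Lp ℝ ∞ μ) : ∀ᵐ x ∂μ, ‖φ x‖ ≤ ‖φ‖ := by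
  have h := ae_le_eLpNormEssSup (f := ⇑φ) (μ := μ)
  have hne : eLpNormEssSup (⇑φ) μ ≠ ∞ := by
    have := Lp.eLpNorm_ne_top φ
    rwa [eLpNorm_exponent_top] at this
  filter_upwards [h] with x hx
  rw [Lp.norm_def, eLpNorm_exponent_top]
  calc ‖φ x‖ = ((‖φ x‖₊ : ENNReal)).toReal := by simp
    _ ≤ _ := ENNReal.toReal_mono hne hx

lemma integrable_Lptop_mul (φ : Lp ℝ ∞ μ) {g : α → ℝ} (hg : Integrable g μ) :
    Integrable (fun x => φ x * g x) μ :=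
  hg.bdd_mul (Lp.aestronglyMeasurable φ) (ae_norm_le_norm_top φ)

noncomputable def pairCLM (g : α → ℝ) (hg : Integrable g μ) : Lp ℝ ∞ μ →L[ℝ] ℝ :=
  LinearMap.mkContinuous
    { toFun := fun φ => ∫ x, φ x * g x ∂μ
      map_add' := fun φ ψ => by
        rw [← integral_add (integrable_Lptop_mul φ hg) (integrable_Lptop_mul ψ hg)]
        refine integral_congr_ae ?_
        filter_upwards [Lp.coeFn_add φ ψ] with x hx
        rw [hx]; simp [add_mul]
      map_smul' := fun c φ => by
        rw [← integral_smul]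
        refine integral_congr_ae ?_
        filter_upwards [Lp.coeFn_smul c φ] with x hx
        simp [hx, mul_assoc] }
    (∫ x, |g x| ∂μ)
    (fun φ => by
      simp only [LinearMap.coe_mk, AddHom.coe_mk]
      calc ‖∫ x, φ x * g x ∂μ‖ ≤ ∫ x, ‖φ‖ * |g x| ∂μ := by
            refine norm_integral_le_of_norm_le (hg.abs.const_mul _) ?_
            filter_upwards [ae_norm_le_norm_top φ] with x hx
            calc ‖φ x * g x‖ = ‖φ x‖ * |g x| := by
                  rw [norm_mul, Real.norm_eq_abs (g x)]
              _ ≤ ‖φ‖ * |g x| := mul_le_mul_of_nonneg_right hx (abs_nonneg _)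
        _ = (∫ x, |g x| ∂μ) * ‖φ‖ := by rw [integral_const_mul]; ring)

lemma pairCLM_apply (g : α → ℝ) (hg : Integrable g μ) (φ : Lp ℝ ∞ μ) :
    pairCLM g hg φ = ∫ x, φ x * g x ∂μ := rfl

lemma weakL1_bound {gn : ℕ → α → ℝ} (hgn : ∀ n, Integrable (gn n) μ)
    (hconv : ∀ φ : α → ℝ, Measurable φ → (∃ C : ℝ, ∀ᵐ x ∂μ, |φ x| ≤ C) →
      ∃ L : ℝ, Tendsto (fun n => ∫ x, φ x * gn n x ∂μ) atTop (nhds L)) :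
    ∃ C : ℝ, 0 ≤ C ∧ ∀ n, ∫ x, |gn n x| ∂μ ≤ C := by
  set T : ℕ → Lp ℝ ∞ μ →L[ℝ] ℝ := fun n => pairCLM (gn n) (hgn n) with hT
  have hpt : ∀ φ : Lp ℝ ∞ μ, ∃ C, ∀ n, ‖T n φ‖ ≤ C := by
    intro φ
    set ψ := (Lp.aestronglyMeasurable φ).mk _ with hψ
    have hψm : Measurable ψ := (Lp.aestronglyMeasurable φ).stronglyMeasurable_mk.measurable
    have hψe : ⇑φ =ᵐ[μ] ψ := (Lp.aestronglyMeasurable φ).ae_eq_mk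
    have hbd : ∃ C : ℝ, ∀ᵐ x ∂μ, |ψ x| ≤ C := by
      refine ⟨‖φ‖, ?_⟩
      filter_upwards [hψe, ae_norm_le_norm_top φ] with x h1 h2
      rw [← h1]; exact h2
    obtain ⟨L, hL⟩ := hconv ψ hψm hbd
    have hTφ : ∀ n, T n φ = ∫ x, ψ x * gn n x ∂μ := by
      intro n
      rw [hT, pairCLM_apply]
      refine integral_congr_ae ?_
      filter_upwards [hψe] with x hx
      rw [hx]
    have htend : Tendsto (fun n => ‖T n φ‖) atTop (nhds ‖L‖) := by
      have : Tendsto (fun n => T n φ) atTop (nhds L) := by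
        simp only [hTφ]; exact hL
      exact this.norm
    obtain ⟨C, hC⟩ := htend.bddAbove_range
    exact ⟨C, fun n => hC ⟨n, rfl⟩⟩
  obtain ⟨C', hC'⟩ := banach_steinhaus hpt
  refine ⟨max C' 0, le_max_right _ _, fun n => ?_⟩
  -- test against the sign of gn n
  set m := (hgn n).1.mk _ with hm
  have hmm : Measurable m := (hgn n).1.stronglyMeasurable_mk.measurable
  have hme : gn n =ᵐ[μ] m := (hgn n).1.ae_eq_mk
  set s : α → ℝ := fun x => if 0 ≤ m x then 1 else -1 with hs
  have hsm : Measurable s := Measurable.ite (measurableSet_le measurable_const hmm)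
    measurable_const measurable_const
  have hsb : ∀ x, ‖s x‖ ≤ 1 := by
    intro x; rw [hs]; by_cases h : 0 ≤ m x <;> simp [h]
  have hmem : MemLp s ∞ μ := memLp_top_of_bound hsm.aestronglyMeasurable 1
    (Eventually.of_forall hsb)
  set φ := hmem.toLp s with hφ
  have hφe : ⇑φ =ᵐ[μ] s := MemLp.coeFn_toLp hmem
  have hφn : ‖φ‖ ≤ 1 := by
    have h := Lp.norm_le_of_ae_bound (μ := μ) (f := φ) zero_le_one
      (by filter_upwards [hφe] with x hx; rw [hx]; exact hsb x)
    simpa using h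
  have hval : T n φ = ∫ x, |gn n x| ∂μ := by
    rw [hT, pairCLM_apply]
    refine integral_congr_ae ?_
    filter_upwards [hφe, hme] with x h1 h2
    rw [h1, hs]
    by_cases h : 0 ≤ m x
    · simp only [h, if_true, one_mul]
      rw [h2] at *; exact (abs_of_nonneg h).symm
    · simp only [h, if_false]
      rw [h2]
      rw [abs_of_neg (not_le.mp h)]; ring
  calc ∫ x, |gn n x| ∂μ = T n φ := hval.symm
    _ ≤ ‖T n φ‖ := le_abs_self _
    _ ≤ ‖T n‖ * ‖φ‖ := (T n).le_opNorm φ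
    _ ≤ C' * 1 := mul_le_mul (hC' n) hφn (norm_nonneg _) ((norm_nonneg (T n)).trans (hC' n))
    _ ≤ max C' 0 := by rw [mul_one]; exact le_max_left _ _

end Aux

theorem weak_ae_convergence {N : ℕ} (Ω : Set (Fin N → ℝ))
    (hΩ : MeasurableSet Ω) (hΩfin : volume Ω < ⊤)
    (f : (Fin N → ℝ) → ℝ) (fn : ℕ → (Fin N → ℝ) → ℝ)
    (hf : Measurable f) (hfn : ∀ n, Measurable (fn n))
    (g ξ : (Fin N → ℝ) → ℝ) (gn : ℕ → (Fin N → ℝ) → ℝ)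
    (hg : IntegrableOn g Ω) (hgn : ∀ n, IntegrableOn (gn n) Ω)
    (hξ : IntegrableOn ξ Ω)
    (hae : ∀ᵐ x ∂(volume.restrict Ω),
      Tendsto (fun n => fn n x) atTop (nhds (f x)))
    (hfngn_int : ∀ n, IntegrableOn (fun x => fn n x * gn n x) Ω)
    (hweak_g : ∀ φ : (Fin N → ℝ) → ℝ, Measurable φ →
      (∃ C : ℝ, ∀ᵐ x ∂(volume.restrict Ω), |φ x| ≤ C) →
      Tendsto (fun n => ∫ x in Ω, φ x * gn n x) atTop
        (nhds (∫ x in Ω, φ x * g x)))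
    (hweak_fg : ∀ φ : (Fin N → ℝ) → ℝ, Measurable φ →
      (∃ C : ℝ, ∀ᵐ x ∂(volume.restrict Ω), |φ x| ≤ C) →
      Tendsto (fun n => ∫ x in Ω, φ x * (fn n x * gn n x)) atTop
        (nhds (∫ x in Ω, φ x * ξ x))) :
    ∀ᵐ x ∂(volume.restrict Ω), ξ x = f x * g x := by
  haveI : IsFiniteMeasure (volume.restrict Ω) := ⟨by rwa [Measure.restrict_apply_univ]⟩
  obtain ⟨C, hC0, hC⟩ := weakL1_bound (μ := volume.restrict Ω) hgn
    (fun φ hφm hφb => ⟨_, hweak_g φ hφm hφb⟩)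
  -- Key step: on any measurable B ⊆ Ω where `f` is bounded and the convergence is
  -- uniform, `ξ = f * g` a.e.
  have goodset : ∀ B : Set (Fin N → ℝ), MeasurableSet B → B ⊆ Ω → ∀ M : ℝ,
      (∀ x ∈ B, |f x| ≤ M) → TendstoUniformlyOn fn f atTop B →
      ∀ᵐ x ∂(volume.restrict B), ξ x = f x * g x := by
    intro B hB hBΩ M hM hu
    have hM0 : (0:ℝ) ≤ max M 0 := le_max_right _ _
    -- first: agreement of set integrals on measurable subsets of B
    have key : ∀ E : Set (Fin N → ℝ), MeasurableSet E → E ⊆ B →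
        ∫ x in E, ξ x = ∫ x in E, f x * g x := by
      intro E hE hEB
      have hEΩ : E ⊆ Ω := hEB.trans hBΩ
      have hrw : ∀ h : (Fin N → ℝ) → ℝ, ∀ ψ : (Fin N → ℝ) → ℝ,
          (∫ x in Ω, E.indicator ψ x * h x) = ∫ x in E, ψ x * h x := by
        intro h ψ
        have : (fun x => E.indicator ψ x * h x) = E.indicator (fun x => ψ x * h x) := by
          funext x
          by_cases hx : x ∈ E <;> simp [Set.indicator_apply, hx]
        rw [this, integral_indicator hE, Measure.restrict_restrict hE,
          Set.inter_eq_self_of_subset_left hEΩ]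
      -- h1 : ∫_E fn gn → ∫_E ξ
      have h1 := hweak_fg (E.indicator fun _ => (1:ℝ))
        (measurable_const.indicator hE)
        ⟨1, Eventually.of_forall fun x => by
          by_cases hx : x ∈ E <;> simp [Set.indicator_apply, hx]⟩
      simp only [hrw, one_mul] at h1
      -- h2 : ∫_E f gn → ∫_E f g
      have h2 := hweak_g (E.indicator f) (hf.indicator hE)
        ⟨max M 0, Eventually.of_forall fun x => by
          by_cases hx : x ∈ E
          · simp only [Set.indicator_of_mem hx]
            exact le_trans (hM x (hEB hx)) (le_max_left _ _)
          · simp [Set.indicator_of_notMem hx, hM0]⟩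
      simp only [hrw] at h2
      -- integrability facts
      have hfg_int : ∀ n, IntegrableOn (fun x => f x * gn n x) E := by
        intro n
        refine ((hgn n).mono_set hEΩ).bdd_mul (c := max M 0) ?_ ?_
        · exact hf.aestronglyMeasurable
        · filter_upwards [ae_restrict_mem hE] with x hx
          rw [Real.norm_eq_abs]
          exact le_trans (hM x (hEB hx)) (le_max_left M 0)
      have hfngn_E : ∀ n, IntegrableOn (fun x => fn n x * gn n x) E :=
        fun n => (hfngn_int n).mono_set hEΩ
      -- h3 : difference tends to 0
      have h3 : Tendsto (fun n => (∫ x in E, fn n x * gn n x) - ∫ x in E, f x * gn n x)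
          atTop (nhds 0) := by
        rw [NormedAddCommGroup.tendsto_nhds_zero]
        intro ε hε
        have hε' : 0 < ε / (2 * (C + 1)) := by positivity
        have := (Metric.tendstoUniformlyOn_iff.mp hu) _ hε'
        filter_upwards [this] with n hn
        have hsub : (∫ x in E, fn n x * gn n x) - ∫ x in E, f x * gn n x
            = ∫ x in E, (fn n x * gn n x - f x * gn n x) :=
          (integral_sub (hfngn_E n) (hfg_int n)).symm
        rw [hsub]
        have hb1 : ‖∫ x in E, (fn n x * gn n x - f x * gn n x)‖
            ≤ ∫ x in E, ε / (2 * (C + 1)) * |gn n x| := by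
          refine norm_integral_le_of_norm_le (((hgn n).mono_set hEΩ).abs.const_mul _) ?_
          filter_upwards [ae_restrict_mem hE] with x hx
          have hd := hn x (hEB hx)
          rw [Real.dist_eq, abs_sub_comm] at hd
          calc ‖fn n x * gn n x - f x * gn n x‖ = |fn n x - f x| * |gn n x| := by
                rw [Real.norm_eq_abs, ← abs_mul]; ring_nf
            _ ≤ ε / (2 * (C + 1)) * |gn n x| :=
                mul_le_mul_of_nonneg_right hd.le (abs_nonneg _)
        have hb2 : ∫ x in E, ε / (2 * (C + 1)) * |gn n x|
            ≤ ε / (2 * (C + 1)) * C := by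
          rw [integral_const_mul]
          refine mul_le_mul_of_nonneg_left ?_ hε'.le
          calc ∫ x in E, |gn n x| ≤ ∫ x in Ω, |gn n x| := by
                refine setIntegral_mono_set (hgn n).abs ?_ (HasSubset.Subset.eventuallyLE hEΩ)
                exact Eventually.of_forall fun x => abs_nonneg _
            _ ≤ C := hC n
        have hlt : ε / (2 * (C + 1)) * C < ε := by
          rw [div_mul_eq_mul_div, div_lt_iff₀ (by positivity)]
          nlinarith
        linarith [le_trans hb1 hb2]
      have h4 : Tendsto (fun n => ∫ x in E, fn n x * gn n x) atTop
          (nhds (∫ x in E, f x * g x)) := by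
        have := h3.add h2
        simpa using this
      exact tendsto_nhds_unique h1 h4
    -- conclude a.e. equality on B via uniqueness of set integrals
    refine ae_eq_of_forall_setIntegral_eq_of_sigmaFinite
      (μ := volume.restrict B) ?_ ?_ ?_
    · intro s hs _
      rw [IntegrableOn, Measure.restrict_restrict hs]
      exact hξ.mono_set ((Set.inter_subset_right).trans hBΩ)
    · intro s hs _
      rw [IntegrableOn, Measure.restrict_restrict hs]
      refine (hg.mono_set ((Set.inter_subset_right).trans hBΩ)).bdd_mul
        (c := max M 0) hf.aestronglyMeasurable ?_
      filter_upwards [ae_restrict_mem (hs.inter hB)] with x hx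
      rw [Real.norm_eq_abs]
      exact le_trans (hM x hx.2) (le_max_left M 0)
    · intro s hs _
      rw [Measure.restrict_restrict hs]
      exact key (s ∩ B) (hs.inter hB) Set.inter_subset_right
  -- Now assemble: truncation + Egorov
  set D := {x | ¬ ξ x = f x * g x} with hD
  rw [ae_iff]
  set V : ℕ → Set (Fin N → ℝ) := fun m => Ω ∩ {x | (m:ℝ) < |f x|} with hV
  have hVmeas : ∀ m, MeasurableSet (V m) :=
    fun m => hΩ.inter (measurableSet_lt measurable_const hf.abs)
  have hVanti : Antitone V := by
    intro a b hab
    refine Set.inter_subset_inter_right _ ?_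
    intro x hx
    simp only [Set.mem_setOf_eq] at hx ⊢
    exact lt_of_le_of_lt (Nat.cast_le.mpr hab) hx
  have hVempty : ⋂ m, V m = ∅ := by
    ext x
    simp only [Set.mem_iInter, Set.mem_empty_iff_false, iff_false, not_forall]
    obtain ⟨m, hm⟩ := exists_nat_gt |f x|
    exact ⟨m, fun h => absurd h.2 (not_lt.mpr hm.le)⟩
  have hVtend : Tendsto (fun m => volume (V m)) atTop (nhds 0) := by
    have := tendsto_measure_iInter_atTop (μ := volume)
      (fun m => (hVmeas m).nullMeasurableSet) hVanti
      ⟨0, (lt_of_le_of_lt (measure_mono Set.inter_subset_left) hΩfin).ne⟩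
    rwa [hVempty, measure_empty] at this
  -- final bound
  refine le_antisymm ?_ (zero_le ..)
  refine ENNReal.le_of_forall_pos_le_add fun ε hε _ => ?_
  rw [zero_add]
  set r : ℝ := (ε : ℝ) / 2 with hr
  have hr0 : 0 < r := by positivity
  -- Egorov
  have hae' : ∀ᵐ x ∂(volume : Measure (Fin N → ℝ)), x ∈ Ω →
      Tendsto (fun n => fn n x) atTop (nhds (f x)) := (ae_restrict_iff' hΩ).mp hae
  obtain ⟨t, htΩ, htm, htμ, htu⟩ := tendstoUniformlyOn_of_ae_tendsto
    (fun n => (hfn n).stronglyMeasurable) hf.stronglyMeasurable hΩ hΩfin.ne hae' hr0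
  -- truncation
  have : ∀ᶠ m in atTop, volume (V m) < ENNReal.ofReal r :=
    hVtend.eventually (gt_mem_nhds (ENNReal.ofReal_pos.mpr hr0))
  obtain ⟨m, hm⟩ := this.exists
  set B := (Ω \ t) \ {x | (m:ℝ) < |f x|} with hB
  have hBmeas : MeasurableSet B :=
    (hΩ.diff htm).diff (measurableSet_lt measurable_const hf.abs)
  have hBΩ : B ⊆ Ω := fun x hx => hx.1.1
  have hMB : ∀ x ∈ B, |f x| ≤ (m:ℝ) := fun x hx => not_lt.mp hx.2
  have huB : TendstoUniformlyOn fn f atTop B := htu.mono fun x hx => hx.1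
  have hgood := goodset B hBmeas hBΩ (m:ℝ) hMB huB
  have hDB : volume (D ∩ B) = 0 := by
    have := ae_iff.mp hgood
    rwa [Measure.restrict_apply' hBmeas] at this
  have hsub : D ∩ Ω ⊆ (D ∩ B) ∪ (t ∪ V m) := by
    intro x hx
    by_cases hxB : x ∈ B
    · exact Or.inl ⟨hx.1, hxB⟩
    · right
      rw [hB] at hxB
      simp only [Set.mem_diff, not_and, not_not, Set.mem_setOf_eq] at hxB
      by_cases hxt : x ∈ t
      · exact Or.inl hxt
      · refine Or.inr ⟨hx.2, ?_⟩
        have := hxB ⟨hx.2, hxt⟩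
        exact this
  calc (volume.restrict Ω) D = volume (D ∩ Ω) := Measure.restrict_apply' hΩ
    _ ≤ volume (D ∩ B) + (volume t + volume (V m)) :=
        le_trans (measure_mono hsub) (le_trans (measure_union_le _ _)
          (by gcongr; exact measure_union_le _ _))
    _ ≤ 0 + (ENNReal.ofReal r + ENNReal.ofReal r) := by
        rw [hDB]; exact add_le_add le_rfl (add_le_add htμ hm.le)
    _ = ENNReal.ofReal (r + r) := by rw [zero_add, ENNReal.ofReal_add hr0.le hr0.le]
    _ = (ε : ENNReal) := by
        have hrr : r + r = (ε : ℝ) := by rw [hr]; ring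
        rw [hrr, ENNReal.ofReal_coe_nnreal]
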